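/- For a prime p and m ≥ 2, the group Z_p × Z_p × Z_{p^m} has exactly 2p² + p + 2 isolated subgroups: 1, G, p² + p subgroups of order p, and p² subgroups of order p². -/

import Mathlib

/-- `H` is isolated in `G`: every `x ∈ G` is in `H` or `⟨x⟩ ∩ H = 1`. -/
def Subgroup.IsIsolated {G : Type*} [Group G] (H : Subgroup G) : Prop :=
  ∀ x : G, x ∈ H ∨ Subgroup.zpowers x ⊓ H = ⊥

/-- `o_H(x)`: the smallest positive `m` with `x ^ m ∈ H`. -/
noncomputable def relOrder {G : Type*} [Group G] (H : Subgroup G) (x : G) : ℕ :=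
  sInf {m : ℕ | 0 < m ∧ x ^ m ∈ H}

/-- `ψ(G)`: the sum of the orders of the elements of `G`. -/
noncomputable def psi (G : Type*) [Group G] [Fintype G] : ℕ :=
  ∑ x : G, orderOf x

set_option linter.unusedSectionVars false
namespace Stmt15

lemma isIsolated_iff {G : Type*} [Group G] (H : Subgroup G) :
    H.IsIsolated ↔ ∀ x : G, x ∈ H ∨ ∀ n : ℤ, x ^ n ∈ H → x ^ n = 1 := by
  unfold Subgroup.IsIsolated
  refine forall_congr' fun x => or_congr_right ?_
  rw [Subgroup.eq_bot_iff_forall]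
  constructor
  · intro h n hn
    exact h _ ⟨Subgroup.mem_zpowers_iff.mpr ⟨n, rfl⟩, hn⟩
  · rintro h y ⟨hy1, hy2⟩
    obtain ⟨n, rfl⟩ := Subgroup.mem_zpowers_iff.mp hy1
    exact h n hy2

variable (p : ℕ) [Fact p.Prime] (m : ℕ)

abbrev A := ZMod p × ZMod p × ZMod (p ^ m)
abbrev M := Multiplicative (ZMod p) × Multiplicative (ZMod p) × Multiplicative (ZMod (p ^ m))

def ι : A p m ≃ M p m where
  toFun a := (Multiplicative.ofAdd a.1, Multiplicative.ofAdd a.2.1, Multiplicative.ofAdd a.2.2)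
  invFun x := (x.1.toAdd, x.2.1.toAdd, x.2.2.toAdd)
  left_inv _ := rfl
  right_inv _ := rfl

variable {p m}

lemma ι_add (a b : A p m) : ι p m (a + b) = ι p m a * ι p m b := rfl
lemma ι_zero : ι p m 0 = 1 := rfl
lemma ι_zsmul (n : ℤ) (a : A p m) : ι p m (n • a) = (ι p m a) ^ n := rfl
lemma ι_eq_one_iff (a : A p m) : ι p m a = 1 ↔ a = 0 := by
  constructor
  · intro h; have := congrArg (ι p m).symm h; simp at this; exact this
  · rintro rfl; rfl

variable (p m) in
def E : Subgroup (M p m) ≃ AddSubgroup (A p m) where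
  toFun H :=
    { carrier := ι p m ⁻¹' H
      zero_mem' := H.one_mem
      add_mem' := fun ha hb => H.mul_mem ha hb
      neg_mem' := fun ha => H.inv_mem ha }
  invFun K :=
    { carrier := (ι p m).symm ⁻¹' K
      one_mem' := K.zero_mem
      mul_mem' := fun ha hb => K.add_mem ha hb
      inv_mem' := fun ha => K.neg_mem ha }
  left_inv H := SetLike.ext fun x => by
    constructor
    · intro h; have h' : ι p m ((ι p m).symm x) ∈ H := h; rwa [Equiv.apply_symm_apply] at h'
    · intro h; show ι p m ((ι p m).symm x) ∈ H; rwa [Equiv.apply_symm_apply]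
  right_inv K := SetLike.ext fun a => by
    constructor
    · intro h; have h' : (ι p m).symm (ι p m a) ∈ K := h; rwa [Equiv.symm_apply_apply] at h'
    · intro h; show (ι p m).symm (ι p m a) ∈ K; rwa [Equiv.symm_apply_apply]

lemma mem_E (H : Subgroup (M p m)) (a : A p m) : a ∈ E p m H ↔ ι p m a ∈ H := Iff.rfl

def AIso (K : AddSubgroup (A p m)) : Prop :=
  ∀ x : A p m, x ∈ K ∨ ∀ n : ℤ, n • x ∈ K → n • x = 0

lemma isIsolated_iff_aiso (H : Subgroup (M p m)) : H.IsIsolated ↔ AIso (E p m H) := by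
  rw [isIsolated_iff]
  constructor
  · intro h a
    rcases h (ι p m a) with h1 | h1
    · exact Or.inl h1
    · refine Or.inr fun n hn => ?_
      rw [← ι_eq_one_iff, ι_zsmul]
      exact h1 n (by rwa [mem_E, ι_zsmul] at hn)
  · intro h x
    rcases h ((ι p m).symm x) with h1 | h1
    · left; rwa [mem_E, Equiv.apply_symm_apply] at h1
    · right; intro n hn
      have := h1 n (by rw [mem_E, ι_zsmul, Equiv.apply_symm_apply]; exact hn)
      rw [← ι_eq_one_iff, ι_zsmul, Equiv.apply_symm_apply] at this
      exact this

lemma card_E (H : Subgroup (M p m)) : Nat.card (E p m H) = Nat.card H :=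
  Nat.card_congr ((ι p m).subtypeEquiv fun a => (mem_E H a))



instance : NeZero p := ⟨(Fact.out : p.Prime).ne_zero⟩
instance : NeZero (p ^ m) := ⟨pow_ne_zero m (Fact.out : p.Prime).ne_zero⟩

variable (hm : 2 ≤ m)
include hm

lemma hm1 : 1 ≤ m := le_trans one_le_two hm

lemma g_aux (x y : ZMod p) : ((p ^ (m - 1) * (x + y).val : ℕ) : ZMod (p ^ m))
    = ((p ^ (m - 1) * x.val : ℕ) : ZMod (p ^ m)) + ((p ^ (m - 1) * y.val : ℕ) : ZMod (p ^ m)) := by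
  have hp : 0 < p := (Fact.out : p.Prime).pos
  rw [ZMod.val_add]
  set s := x.val + y.val with hs
  have key : (p ^ (m - 1) * s : ℕ) = p ^ (m - 1) * (s % p) + p ^ m * (s / p) := by
    conv_lhs => rw [← Nat.mod_add_div s p]
    have h2 : p ^ (m - 1) * p = p ^ m := by
      rw [← pow_succ, Nat.sub_add_cancel (hm1 hm)]
    rw [Nat.mul_add, ← Nat.mul_assoc, h2]
  have h0 : ((p ^ m * (s / p) : ℕ) : ZMod (p ^ m)) = 0 := by
    rw [ZMod.natCast_eq_zero_iff]; exact dvd_mul_right _ _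
  have hc := congrArg (Nat.cast : ℕ → ZMod (p ^ m)) key
  rw [Nat.cast_add, h0, add_zero] at hc
  rw [← hc, hs, Nat.mul_add, Nat.cast_add]

/-- additive embedding `ZMod p →+ ZMod (p^m)`, `x ↦ p^(m-1) * x`. -/
def g : ZMod p →+ ZMod (p ^ m) where
  toFun x := ((p ^ (m - 1) * x.val : ℕ) : ZMod (p ^ m))
  map_zero' := by simp
  map_add' x y := g_aux hm x y

lemma g_apply (c : ZMod p) : g hm c = ((p ^ (m - 1) * c.val : ℕ) : ZMod (p ^ m)) := by rfl

lemma g_injective : Function.Injective (g (p := p) hm) := by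
  intro x y h
  rw [g_apply, g_apply] at h
  have hx : p ^ (m - 1) * x.val < p ^ m := by
    calc p ^ (m - 1) * x.val < p ^ (m - 1) * p := by
          exact (Nat.mul_lt_mul_left (pow_pos (Fact.out : p.Prime).pos _)).mpr x.val_lt
      _ = p ^ m := by rw [← pow_succ, Nat.sub_add_cancel (hm1 hm)]
  have hy : p ^ (m - 1) * y.val < p ^ m := by
    calc p ^ (m - 1) * y.val < p ^ (m - 1) * p := by
          exact (Nat.mul_lt_mul_left (pow_pos (Fact.out : p.Prime).pos _)).mpr y.val_lt
      _ = p ^ m := by rw [← pow_succ, Nat.sub_add_cancel (hm1 hm)]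
  have := congrArg ZMod.val h
  rw [ZMod.val_natCast_of_lt hx, ZMod.val_natCast_of_lt hy] at this
  have := Nat.eq_of_mul_eq_mul_left (pow_pos (Fact.out : p.Prime).pos (m-1)) this
  have := congrArg (fun n : ℕ => (n : ZMod p)) this
  simpa [ZMod.natCast_zmod_val] using this

lemma p_mul_g (c : ZMod p) : (p : ZMod (p ^ m)) * g hm c = 0 := by
  rw [g_apply]
  have : (p : ZMod (p ^ m)) * ((p ^ (m - 1) * c.val : ℕ) : ZMod (p ^ m))
      = ((p ^ m * c.val : ℕ) : ZMod (p ^ m)) := by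
    push_cast
    rw [← mul_assoc, ← pow_succ', Nat.sub_add_cancel (hm1 hm)]
  rw [this]
  simp [ZMod.natCast_eq_zero_iff, Dvd.intro]

lemma exists_g (c : ZMod (p ^ m)) (hc : (p : ZMod (p ^ m)) * c = 0) : ∃ γ, g hm γ = c := by
  have h1 : ((p * c.val : ℕ) : ZMod (p ^ m)) = 0 := by
    push_cast [ZMod.natCast_zmod_val]; exact hc
  rw [ZMod.natCast_eq_zero_iff] at h1
  have hp : 0 < p := (Fact.out : p.Prime).pos
  have h2 : p ^ (m - 1) ∣ c.val := by
    have : p * p ^ (m - 1) ∣ p * c.val := by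
      rwa [← pow_succ', Nat.sub_add_cancel (hm1 hm)]
    exact (mul_dvd_mul_iff_left hp.ne').mp this
  obtain ⟨k, hk⟩ := h2
  have hklt : k < p := by
    by_contra h
    push_neg at h
    have : p ^ m ≤ c.val := by
      calc p ^ m = p ^ (m - 1) * p := by rw [← pow_succ, Nat.sub_add_cancel (hm1 hm)]
        _ ≤ p ^ (m - 1) * k := Nat.mul_le_mul_left _ h
        _ = c.val := hk.symm
    exact absurd c.val_lt (not_lt.mpr this)
  refine ⟨(k : ZMod p), ?_⟩
  rw [g_apply, ZMod.val_natCast_of_lt hklt, ← hk, ZMod.natCast_zmod_val]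

omit hm in
lemma val_smul_zmod {n : ℕ} [NeZero n] (x : ZMod n) (y : ZMod n) : x.val • y = x * y := by
  rw [nsmul_eq_mul, ZMod.natCast_zmod_val]

lemma val_smul_g (x : ZMod p) (c : ZMod p) : x.val • g hm c = g hm (x * c) := by
  rw [← map_nsmul, val_smul_zmod]


/-- the line spanned by `(1, b, g c)`. -/
def ℓ1 (b c : ZMod p) : ZMod p →+ A p m :=
  (AddMonoidHom.id _).prod ((AddMonoidHom.mulLeft b).prod
    ((g hm).comp (AddMonoidHom.mulLeft c)))

lemma ℓ1_apply (b c x : ZMod p) : ℓ1 hm b c x = (x, b * x, g hm (c * x)) := rfl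

/-- the line spanned by `(0, 1, g c)`. -/
def ℓ2 (c : ZMod p) : ZMod p →+ A p m :=
  (0 : ZMod p →+ ZMod p).prod ((AddMonoidHom.id _).prod
    ((g hm).comp (AddMonoidHom.mulLeft c)))

lemma ℓ2_apply (c x : ZMod p) : ℓ2 hm c x = (0, x, g hm (c * x)) := rfl

/-- the plane `{(x, y, g (α x + β y))}`. -/
def F (α β : ZMod p) : ZMod p × ZMod p →+ A p m :=
  (AddMonoidHom.fst _ _).prod ((AddMonoidHom.snd _ _).prod
    ((g hm).comp ((AddMonoidHom.mulLeft α).comp (AddMonoidHom.fst _ _) +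
      (AddMonoidHom.mulLeft β).comp (AddMonoidHom.snd _ _))))

lemma F_apply (α β x y : ZMod p) : F hm α β (x, y) = (x, y, g hm (α * x + β * y)) := rfl

def L1 (b c : ZMod p) : AddSubgroup (A p m) := (ℓ1 hm b c).range
def L2 (c : ZMod p) : AddSubgroup (A p m) := (ℓ2 hm c).range
def P (α β : ZMod p) : AddSubgroup (A p m) := (F hm α β).range

omit hm in
lemma p_smul_eq (x : A p m) : p • x = (0, 0, (p : ZMod (p ^ m)) * x.2.2) := by
  have h1 : p • x.1 = 0 := by rw [nsmul_eq_mul, ZMod.natCast_self, zero_mul]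
  have h2 : p • x.2.1 = 0 := by rw [nsmul_eq_mul, ZMod.natCast_self, zero_mul]
  have h3 : p • x.2.2 = (p : ZMod (p ^ m)) * x.2.2 := nsmul_eq_mul _ _
  exact Prod.ext h1 (Prod.ext h2 h3)

lemma pm_smul_eq_zero (x : A p m) : p ^ m • x = 0 := by
  have hdvd : (p : ℕ) ∣ p ^ m := dvd_pow_self p (by omega : m ≠ 0)
  have hz : ((p ^ m : ℕ) : ZMod p) = 0 := (ZMod.natCast_eq_zero_iff _ _).mpr hdvd
  have h1 : p ^ m • x.1 = 0 := by rw [nsmul_eq_mul, hz, zero_mul]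
  have h2 : p ^ m • x.2.1 = 0 := by rw [nsmul_eq_mul, hz, zero_mul]
  have h3 : p ^ m • x.2.2 = 0 := by rw [nsmul_eq_mul, ZMod.natCast_self, zero_mul]
  exact Prod.ext h1 (Prod.ext h2 h3)

omit hm in
lemma aiso_root {K : AddSubgroup (A p m)} (h : AIso K) {x : A p m}
    (hx : p • x ∈ K) (h0 : p • x ≠ 0) : x ∈ K := by
  rcases h x with h1 | h1
  · exact h1
  · exfalso
    have := h1 (p : ℤ) (by rwa [natCast_zsmul])
    rw [natCast_zsmul] at this
    exact h0 this

omit hm in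
lemma mem_of_pow_smul_mem {K : AddSubgroup (A p m)}
    (hcl : ∀ x : A p m, p • x ∈ K → p • x = 0 ∨ x ∈ K) :
    ∀ j : ℕ, ∀ x : A p m, p ^ j • x ∈ K → p ^ j • x ≠ 0 → x ∈ K := by
  intro j
  induction j with
  | zero => intro x hx _; simpa using hx
  | succ j ih =>
    intro x hx h0
    have heq : p ^ (j + 1) • x = p • (p ^ j • x) := by
      rw [← mul_nsmul, pow_succ, mul_comm]
    rw [heq] at hx h0
    rcases hcl _ hx with h | h
    · exact absurd h h0
    · refine ih x h fun hz => h0 ?_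
      rw [hz, smul_zero]

lemma aiso_of_pclosed {K : AddSubgroup (A p m)}
    (hcl : ∀ x : A p m, p • x ∈ K → p • x = 0 ∨ x ∈ K) : AIso K := by
  intro x
  by_cases hx : x ∈ K
  · exact Or.inl hx
  · refine Or.inr fun n hn => ?_
    by_contra hy0
    have hp : 0 < p := (Fact.out : p.Prime).pos
    have hmod : n • x = (n % (p ^ m : ℕ)) • x := by
      conv_lhs => rw [← Int.emod_add_mul_ediv n (p ^ m : ℕ)]
      rw [add_zsmul, mul_zsmul, natCast_zsmul, pm_smul_eq_zero hm, add_zero]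
    set r : ℕ := (n % (p ^ m : ℕ)).toNat with hr
    have hrn : ((r : ℤ)) = n % (p ^ m : ℕ) := by
      rw [hr, Int.toNat_of_nonneg (Int.emod_nonneg n (by exact_mod_cast (pow_ne_zero m hp.ne')))]
    have hy : r • x ∈ K := by
      rw [← natCast_zsmul, hrn, ← hmod]; exact hn
    have hynz : r • x ≠ 0 := by
      rw [← natCast_zsmul, hrn, ← hmod]; exact hy0
    set d : ℕ := Nat.gcd r (p ^ m) with hd
    obtain ⟨j, hjm, hdj⟩ := (Nat.dvd_prime_pow (Fact.out : p.Prime)).mp (Nat.gcd_dvd_right r (p ^ m))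
    have hdK : d • x ∈ K := by
      have hb := Nat.gcd_eq_gcd_ab r (p ^ m)
      have h2 : ((d : ℤ)) • x = Nat.gcdA r (p ^ m) • ((r : ℤ) • x)
          + Nat.gcdB r (p ^ m) • (((p ^ m : ℕ) : ℤ) • x) := by
        rw [← mul_zsmul, ← mul_zsmul, ← add_zsmul,
          mul_comm (Nat.gcdA r (p ^ m)), mul_comm (Nat.gcdB r (p ^ m)), ← hb]
      simp only [natCast_zsmul] at h2
      rw [pm_smul_eq_zero hm, smul_zero, add_zero] at h2
      rw [h2]
      exact K.zsmul_mem hy _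
    have hdnz : d • x ≠ 0 := by
      intro h0
      obtain ⟨k, hk⟩ := Nat.gcd_dvd_left r (p ^ m)
      apply hynz
      have hre : r • x = k • (d • x) := by rw [smul_smul, mul_comm, ← hk]
      rw [hre, h0, smul_zero]
    rw [hd, hdj] at hdK hdnz
    exact hx (mem_of_pow_smul_mem hcl j x hdK hdnz)

lemma third_gen {K : AddSubgroup (A p m)} (h : AIso K) (d : ZMod (p ^ m)) (hd : d ≠ 0)
    (hdK : ((0, 0, d) : A p m) ∈ K) : ((0, 0, 1) : A p m) ∈ K := by
  have hp : 0 < p := (Fact.out : p.Prime).pos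
  have aux : ∀ j : ℕ, ∀ d : ZMod (p ^ m), d ≠ 0 → ¬ (p ^ j ∣ d.val) →
      ((0, 0, d) : A p m) ∈ K → ((0, 0, 1) : A p m) ∈ K := by
    intro j
    induction j with
    | zero => intro d _ hdvd _; exact absurd (one_dvd _) hdvd
    | succ j ih =>
      intro d hd0 hdvd hdK
      by_cases hu : (p : ℕ) ∣ d.val
      · set e : ZMod (p ^ m) := ((d.val / p : ℕ) : ZMod (p ^ m)) with he
        have hpe : (p : ZMod (p ^ m)) * e = d := by
          rw [he, ← Nat.cast_mul, Nat.mul_div_cancel' hu, ZMod.natCast_zmod_val]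
        have heval : e.val = d.val / p := by
          rw [he, ZMod.val_natCast_of_lt (lt_of_le_of_lt (Nat.div_le_self _ _) d.val_lt)]
        have he0 : e ≠ 0 := by
          intro h0; rw [h0, mul_zero] at hpe; exact hd0 hpe.symm
        have hsmul : p • ((0, 0, e) : A p m) = (0, 0, d) := by
          rw [p_smul_eq]; simp [hpe]
        have heK : ((0, 0, e) : A p m) ∈ K := by
          refine aiso_root h (x := (0,0,e)) ?_ ?_
          · rw [hsmul]; exact hdK
          · rw [hsmul]; simp [Prod.ext_iff, hd0]
        refine ih e he0 ?_ heK
        intro hdvd'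
        apply hdvd
        rw [heval] at hdvd'
        obtain ⟨k, hk⟩ := hdvd'
        have : d.val = p ^ (j + 1) * k := by
          rw [pow_succ, mul_comm (p ^ j) p, mul_assoc, ← hk, Nat.mul_div_cancel' hu]
        exact ⟨k, this⟩
      · -- d is a unit
        have hcop : (d.val).Coprime (p ^ m) :=
          Nat.Coprime.pow_right m
            (Nat.coprime_comm.mp ((Nat.Prime.coprime_iff_not_dvd (Fact.out : p.Prime)).mpr hu))
        have hunit : IsUnit d := by
          rw [← ZMod.natCast_zmod_val d]
          exact (ZMod.isUnit_iff_coprime _ _).mpr hcop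
        obtain ⟨u, hud⟩ := hunit
        have h1 : ((u⁻¹ : (ZMod (p ^ m))ˣ) : ZMod (p ^ m)).val • ((0, 0, d) : A p m)
            = (0, 0, 1) := by
          have : ((u⁻¹ : (ZMod (p ^ m))ˣ) : ZMod (p ^ m)).val • d = 1 := by
            rw [val_smul_zmod, ← hud, Units.inv_mul]
          simp [Prod.ext_iff, smul_zero, this]
        have := K.nsmul_mem hdK ((u⁻¹ : (ZMod (p ^ m))ˣ) : ZMod (p ^ m)).val
        rwa [h1] at this
  refine aux m d hd ?_ hdK
  intro hdvd
  have := Nat.le_of_dvd (Nat.pos_of_ne_zero (fun h0 => hd ((ZMod.val_eq_zero d).mp h0))) hdvd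
  exact absurd d.val_lt (not_lt.mpr this)

lemma p_ne_zero_zmod : (p : ZMod (p ^ m)) ≠ 0 := by
  intro h
  rw [ZMod.natCast_eq_zero_iff] at h
  have hp : 1 < p := (Fact.out : p.Prime).one_lt
  have : p ^ m ≤ p := Nat.le_of_dvd (Fact.out : p.Prime).pos h
  have : p ^ m < p ^ 2 ∨ True := Or.inr trivial
  have hlt : p < p ^ m := by
    calc p = p ^ 1 := (pow_one p).symm
      _ < p ^ m := Nat.pow_lt_pow_right hp (by omega)
  omega

lemma top_of {K : AddSubgroup (A p m)} (h : AIso K) (h1 : ((0, 0, 1) : A p m) ∈ K) : K = ⊤ := by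
  have hpK : ((0, 0, (p : ZMod (p ^ m))) : A p m) ∈ K := by
    have := K.nsmul_mem h1 p
    have heq : p • ((0, 0, 1) : A p m) = (0, 0, (p : ZMod (p ^ m))) := by
      rw [p_smul_eq]; simp
    rwa [heq] at this
  rw [eq_top_iff]
  rintro ⟨a, b, c⟩ -
  have hy : ((a, b, (1 : ZMod (p ^ m))) : A p m) ∈ K := by
    refine aiso_root h ?_ ?_
    · rw [p_smul_eq]; simpa using hpK
    · rw [p_smul_eq]; simp [Prod.ext_iff, p_ne_zero_zmod hm]
  have hz : ((0, 0, c - 1) : A p m) ∈ K := by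
    have := K.nsmul_mem h1 (c - 1).val
    have heq : (c - 1).val • ((0, 0, 1) : A p m) = (0, 0, c - 1) := by
      simp [Prod.ext_iff, smul_zero, val_smul_zmod]
    rwa [heq] at this
  have := K.add_mem hy hz
  have heq : ((a, b, (1 : ZMod (p ^ m))) : A p m) + (0, 0, c - 1) = (a, b, c) := by
    simp [Prod.ext_iff]
  rwa [heq] at this

lemma aiso_L1 (b c : ZMod p) : AIso (L1 hm b c) := by
  refine aiso_of_pclosed hm fun x hx => ?_
  left
  obtain ⟨t, ht⟩ := hx
  rw [ℓ1_apply, p_smul_eq, Prod.mk.injEq, Prod.mk.injEq] at ht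
  obtain ⟨h1, h2, h3⟩ := ht
  have hz : (p : ZMod (p ^ m)) * x.2.2 = 0 := by rw [← h3, h1, mul_zero, map_zero]
  rw [p_smul_eq, hz]; rfl

lemma aiso_L2 (c : ZMod p) : AIso (L2 hm c) := by
  refine aiso_of_pclosed hm fun x hx => ?_
  left
  obtain ⟨t, ht⟩ := hx
  rw [ℓ2_apply, p_smul_eq, Prod.mk.injEq, Prod.mk.injEq] at ht
  obtain ⟨h1, h2, h3⟩ := ht
  have hz : (p : ZMod (p ^ m)) * x.2.2 = 0 := by rw [← h3, h2, mul_zero, map_zero]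
  rw [p_smul_eq, hz]; rfl

lemma aiso_P (α β : ZMod p) : AIso (P hm α β) := by
  refine aiso_of_pclosed hm fun x hx => ?_
  left
  obtain ⟨⟨t1, t2⟩, ht⟩ := hx
  rw [F_apply, p_smul_eq, Prod.mk.injEq, Prod.mk.injEq] at ht
  obtain ⟨h1, h2, h3⟩ := ht
  have hz : (p : ZMod (p ^ m)) * x.2.2 = 0 := by
    rw [← h3, h1, h2, mul_zero, mul_zero, add_zero, map_zero]
  rw [p_smul_eq, hz]; rfl

lemma aiso_bot : AIso (⊥ : AddSubgroup (A p m)) :=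
  aiso_of_pclosed hm fun _ hx => Or.inl hx

omit hm in
lemma aiso_top : AIso (⊤ : AddSubgroup (A p m)) := fun _ => Or.inl trivial


lemma smul_triple (t a b c : ZMod p) :
    t.val • ((a, b, g hm c) : A p m) = (t * a, t * b, g hm (t * c)) := by
  refine Prod.ext ?_ (Prod.ext ?_ ?_)
  · show t.val • a = t * a
    rw [val_smul_zmod]
  · show t.val • b = t * b
    rw [val_smul_zmod]
  · show t.val • g hm c = g hm (t * c)
    rw [val_smul_g]

lemma classification {K : AddSubgroup (A p m)} (h : AIso K) (hbot : K ≠ ⊥) (htop : K ≠ ⊤) :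
    (∃ b c, K = L1 hm b c) ∨ (∃ c, K = L2 hm c) ∨ (∃ α β, K = P hm α β) := by
  have no1 : ((0, 0, 1) : A p m) ∉ K := fun h1 => htop (top_of hm h h1)
  have fact1 : ∀ x ∈ K, (p : ZMod (p ^ m)) * x.2.2 = 0 := by
    intro x hx
    by_contra hc
    have hKp : ((0, 0, (p : ZMod (p ^ m)) * x.2.2) : A p m) ∈ K := by
      rw [← p_smul_eq]; exact K.nsmul_mem hx p
    exact no1 (third_gen hm h _ hc hKp)
  have fact2 : ∀ c : ZMod (p ^ m), ((0, 0, c) : A p m) ∈ K → c = 0 := by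
    intro c hc
    by_contra h0
    exact no1 (third_gen hm h c h0 hc)
  by_cases hA : ∃ x ∈ K, x.1 ≠ 0
  · obtain ⟨x, hxK, hx1⟩ := hA
    obtain ⟨γ, hγ⟩ := exists_g hm ((x.1⁻¹).val • x).2.2 (fact1 _ (K.nsmul_mem hxK _))
    set b₀ : ZMod p := ((x.1⁻¹).val • x).2.1 with hb₀
    have hx'K : ((1, b₀, g hm γ) : A p m) ∈ K := by
      have he : ((x.1⁻¹).val • x) = ((1, b₀, g hm γ) : A p m) := by
        refine Prod.ext ?_ (Prod.ext rfl hγ.symm)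
        show ((x.1⁻¹).val • x).1 = 1
        show (x.1⁻¹).val • x.1 = 1
        rw [val_smul_zmod, inv_mul_cancel₀ hx1]
      rw [← he]; exact K.nsmul_mem hxK _
    by_cases hB : ∃ y ∈ K, y.1 = 0 ∧ y.2.1 ≠ 0
    · -- plane case
      obtain ⟨y, hyK, hy1, hy2⟩ := hB
      obtain ⟨β, hβ⟩ := exists_g hm ((y.2.1⁻¹).val • y).2.2 (fact1 _ (K.nsmul_mem hyK _))
      have hy'K : ((0, 1, g hm β) : A p m) ∈ K := by
        have he : ((y.2.1⁻¹).val • y) = ((0, 1, g hm β) : A p m) := by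
          refine Prod.ext ?_ (Prod.ext ?_ hβ.symm)
          · show (y.2.1⁻¹).val • y.1 = 0
            rw [val_smul_zmod, hy1, mul_zero]
          · show (y.2.1⁻¹).val • y.2.1 = 1
            rw [val_smul_zmod, inv_mul_cancel₀ hy2]
        rw [← he]; exact K.nsmul_mem hyK _
      refine Or.inr (Or.inr ⟨γ - b₀ * β, β, ?_⟩)
      set α : ZMod p := γ - b₀ * β with hα
      refine SetLike.ext fun z => ⟨fun hzK => ?_, fun hzP => ?_⟩
      · -- z ∈ K → z ∈ P
        have hwK : z - z.1.val • ((1, b₀, g hm γ) : A p m)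
            - (z.2.1 - z.1 * b₀).val • ((0, 1, g hm β) : A p m) ∈ K :=
          K.sub_mem (K.sub_mem hzK (K.nsmul_mem hx'K _)) (K.nsmul_mem hy'K _)
        rw [smul_triple, smul_triple] at hwK
        have hw_eq : z - ((z.1 * 1 : ZMod p), z.1 * b₀, g hm (z.1 * γ))
            - ((z.2.1 - z.1 * b₀) * 0, (z.2.1 - z.1 * b₀) * 1, g hm ((z.2.1 - z.1 * b₀) * β))
            = ((0 : ZMod p), (0 : ZMod p),
                z.2.2 - g hm (z.1 * γ) - g hm ((z.2.1 - z.1 * b₀) * β)) := by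
          refine Prod.ext ?_ (Prod.ext ?_ ?_)
          · show z.1 - z.1 * 1 - (z.2.1 - z.1 * b₀) * 0 = 0
            ring
          · show z.2.1 - z.1 * b₀ - (z.2.1 - z.1 * b₀) * 1 = 0
            ring
          · rfl
        rw [hw_eq] at hwK
        have h3 := fact2 _ hwK
        refine ⟨(z.1, z.2.1), ?_⟩
        rw [F_apply]
        refine Prod.ext rfl (Prod.ext rfl ?_)
        show g hm (α * z.1 + β * z.2.1) = z.2.2
        have hz3 : z.2.2 = g hm (z.1 * γ) + g hm ((z.2.1 - z.1 * b₀) * β) := by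
          linear_combination h3
        rw [hz3, ← map_add]
        congr 1
        rw [hα]; ring
      · -- z ∈ P → z ∈ K
        obtain ⟨⟨t1, t2⟩, rfl⟩ := hzP
        rw [F_apply]
        have he : ((t1, t2, g hm (α * t1 + β * t2)) : A p m)
            = t1.val • ((1, b₀, g hm γ) : A p m)
              + (t2 - t1 * b₀).val • ((0, 1, g hm β) : A p m) := by
          rw [smul_triple, smul_triple]
          refine Prod.ext ?_ (Prod.ext ?_ ?_)
          · show t1 = t1 * 1 + (t2 - t1 * b₀) * 0
            ring
          · show t2 = t1 * b₀ + (t2 - t1 * b₀) * 1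
            ring
          · show g hm (α * t1 + β * t2) = g hm (t1 * γ) + g hm ((t2 - t1 * b₀) * β)
            rw [← map_add]
            congr 1
            rw [hα]; ring
        rw [he]
        exact K.add_mem (K.nsmul_mem hx'K _) (K.nsmul_mem hy'K _)
    · -- line case L1
      push_neg at hB
      refine Or.inl ⟨b₀, γ, ?_⟩
      refine SetLike.ext fun z => ⟨fun hzK => ?_, fun hzL => ?_⟩
      · have hwK : z - z.1.val • ((1, b₀, g hm γ) : A p m) ∈ K :=
          K.sub_mem hzK (K.nsmul_mem hx'K _)
        rw [smul_triple] at hwK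
        have hw1 : (z - ((z.1 * 1 : ZMod p), z.1 * b₀, g hm (z.1 * γ))).1 = 0 := by
          show z.1 - z.1 * 1 = 0; ring
        have hw2 : (z - ((z.1 * 1 : ZMod p), z.1 * b₀, g hm (z.1 * γ))).2.1 = 0 :=
          hB _ hwK hw1
        have hw_eq : z - ((z.1 * 1 : ZMod p), z.1 * b₀, g hm (z.1 * γ))
            = ((0 : ZMod p), (0 : ZMod p), z.2.2 - g hm (z.1 * γ)) :=
          Prod.ext hw1 (Prod.ext hw2 rfl)
        rw [hw_eq] at hwK
        have h3 := fact2 _ hwK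
        refine ⟨z.1, ?_⟩
        rw [ℓ1_apply]
        refine Prod.ext rfl (Prod.ext ?_ ?_)
        · show b₀ * z.1 = z.2.1
          have h2' : z.2.1 - z.1 * b₀ = 0 := hw2
          linear_combination -h2'
        · show g hm (γ * z.1) = z.2.2
          have : z.2.2 = g hm (z.1 * γ) := sub_eq_zero.mp h3
          rw [this]; ring_nf
      · obtain ⟨t, rfl⟩ := hzL
        rw [ℓ1_apply]
        have he : ((t, b₀ * t, g hm (γ * t)) : A p m) = t.val • ((1, b₀, g hm γ) : A p m) := by
          rw [smul_triple]
          refine Prod.ext (by show t = t * 1; ring) (Prod.ext (by show b₀ * t = t * b₀; ring) ?_)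
          show g hm (γ * t) = g hm (t * γ)
          rw [mul_comm]
        rw [he]
        exact K.nsmul_mem hx'K _
  · -- first coordinates all vanish: L2 case
    push_neg at hA
    obtain ⟨z₀, hz₀K, hz₀⟩ : ∃ x ∈ K, x ≠ 0 := by
      by_contra hc
      push_neg at hc
      exact hbot ((AddSubgroup.eq_bot_iff_forall K).mpr hc)
    have hz₀1 : z₀.1 = 0 := hA z₀ hz₀K
    have hz₀2 : z₀.2.1 ≠ 0 := by
      intro h0
      apply hz₀
      have he : z₀ = ((0 : ZMod p), (0 : ZMod p), z₀.2.2) := Prod.ext hz₀1 (Prod.ext h0 rfl)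
      have h3 := fact2 z₀.2.2 (he ▸ hz₀K)
      rw [he, h3]; rfl
    obtain ⟨β, hβ⟩ := exists_g hm ((z₀.2.1⁻¹).val • z₀).2.2 (fact1 _ (K.nsmul_mem hz₀K _))
    have hy'K : ((0, 1, g hm β) : A p m) ∈ K := by
      have he : ((z₀.2.1⁻¹).val • z₀) = ((0, 1, g hm β) : A p m) := by
        refine Prod.ext ?_ (Prod.ext ?_ hβ.symm)
        · show (z₀.2.1⁻¹).val • z₀.1 = 0
          rw [val_smul_zmod, hz₀1, mul_zero]
        · show (z₀.2.1⁻¹).val • z₀.2.1 = 1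
          rw [val_smul_zmod, inv_mul_cancel₀ hz₀2]
      rw [← he]; exact K.nsmul_mem hz₀K _
    refine Or.inr (Or.inl ⟨β, ?_⟩)
    refine SetLike.ext fun z => ⟨fun hzK => ?_, fun hzL => ?_⟩
    · have hwK : z - z.2.1.val • ((0, 1, g hm β) : A p m) ∈ K :=
        K.sub_mem hzK (K.nsmul_mem hy'K _)
      rw [smul_triple] at hwK
      have hw1 : (z - ((z.2.1 * 0 : ZMod p), z.2.1 * 1, g hm (z.2.1 * β))).1 = 0 := by
        show z.1 - z.2.1 * 0 = 0
        rw [hA z hzK]; ring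
      have hw_eq : z - ((z.2.1 * 0 : ZMod p), z.2.1 * 1, g hm (z.2.1 * β))
          = ((0 : ZMod p), (0 : ZMod p), z.2.2 - g hm (z.2.1 * β)) := by
        refine Prod.ext hw1 (Prod.ext ?_ rfl)
        show z.2.1 - z.2.1 * 1 = 0; ring
      rw [hw_eq] at hwK
      have h3 := fact2 _ hwK
      refine ⟨z.2.1, ?_⟩
      rw [ℓ2_apply]
      refine Prod.ext (hA z hzK).symm (Prod.ext rfl ?_)
      show g hm (β * z.2.1) = z.2.2
      have : z.2.2 = g hm (z.2.1 * β) := sub_eq_zero.mp h3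
      rw [this, mul_comm]
    · obtain ⟨t, rfl⟩ := hzL
      rw [ℓ2_apply]
      have he : ((0, t, g hm (β * t)) : A p m) = t.val • ((0, 1, g hm β) : A p m) := by
        rw [smul_triple]
        refine Prod.ext (by show (0 : ZMod p) = t * 0; ring)
          (Prod.ext (by show t = t * 1; ring) ?_)
        show g hm (β * t) = g hm (t * β)
        rw [mul_comm]
      rw [he]
      exact K.nsmul_mem hy'K _

lemma one_lt_p : 1 < p := (Fact.out : p.Prime).one_lt

omit hm in
lemma card_A : Nat.card (A p m) = p ^ (m + 2) := by
  rw [Nat.card_prod, Nat.card_prod, Nat.card_zmod, Nat.card_zmod]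
  ring

lemma card_L1 (b c : ZMod p) : Nat.card (L1 hm b c) = p := by
  have hinj : Function.Injective (ℓ1 hm b c) := by
    intro s t hst
    have := congrArg Prod.fst hst
    simpa [ℓ1_apply] using this
  have : Nat.card (L1 hm b c) = Nat.card (ZMod p) :=
    Nat.card_congr (Equiv.ofInjective _ hinj).symm
  rw [this, Nat.card_zmod]

lemma card_L2 (c : ZMod p) : Nat.card (L2 hm c) = p := by
  have hinj : Function.Injective (ℓ2 hm c) := by
    intro s t hst
    have := congrArg (fun z => z.2.1) hst
    simpa [ℓ2_apply] using this
  have : Nat.card (L2 hm c) = Nat.card (ZMod p) :=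
    Nat.card_congr (Equiv.ofInjective _ hinj).symm
  rw [this, Nat.card_zmod]

lemma card_P (α β : ZMod p) : Nat.card (P hm α β) = p ^ 2 := by
  have hinj : Function.Injective (F hm α β) := by
    rintro ⟨s1, s2⟩ ⟨t1, t2⟩ hst
    have h1 := congrArg Prod.fst hst
    have h2 := congrArg (fun z => z.2.1) hst
    simp only [F_apply] at h1 h2
    exact Prod.ext h1 h2
  have : Nat.card (P hm α β) = Nat.card (ZMod p × ZMod p) :=
    Nat.card_congr (Equiv.ofInjective _ hinj).symm
  rw [this, Nat.card_prod, Nat.card_zmod]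
  ring

lemma inj_L1 {b c b' c' : ZMod p} (h : L1 hm b c = L1 hm b' c') : b = b' ∧ c = c' := by
  have h1 : ((1 : ZMod p), b, g hm c) ∈ L1 hm b' c' := by
    rw [← h]
    exact ⟨1, by rw [ℓ1_apply, mul_one, mul_one]⟩
  obtain ⟨t, ht⟩ := h1
  rw [ℓ1_apply, Prod.mk.injEq, Prod.mk.injEq] at ht
  obtain ⟨ht1, ht2, ht3⟩ := ht
  subst ht1
  constructor
  · rw [← ht2, mul_one]
  · have : g hm c' = g hm c := by rw [← ht3, mul_one]
    exact (g_injective hm this).symm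

lemma inj_L2 {c c' : ZMod p} (h : L2 hm c = L2 hm c') : c = c' := by
  have h1 : ((0 : ZMod p), (1 : ZMod p), g hm c) ∈ L2 hm c' := by
    rw [← h]
    exact ⟨1, by rw [ℓ2_apply, mul_one]⟩
  obtain ⟨t, ht⟩ := h1
  rw [ℓ2_apply, Prod.mk.injEq, Prod.mk.injEq] at ht
  obtain ⟨-, ht2, ht3⟩ := ht
  subst ht2
  have : g hm c' = g hm c := by rw [← ht3, mul_one]
  exact (g_injective hm this).symm

lemma inj_P {α β α' β' : ZMod p} (h : P hm α β = P hm α' β') : α = α' ∧ β = β' := by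
  have h1 : ((1 : ZMod p), (0 : ZMod p), g hm α) ∈ P hm α' β' := by
    rw [← h]
    exact ⟨(1, 0), by rw [F_apply, mul_one, mul_zero, add_zero]⟩
  have h2 : ((0 : ZMod p), (1 : ZMod p), g hm β) ∈ P hm α' β' := by
    rw [← h]
    exact ⟨(0, 1), by rw [F_apply, mul_one, mul_zero, zero_add]⟩
  obtain ⟨⟨t1, t2⟩, ht⟩ := h1
  rw [F_apply, Prod.mk.injEq, Prod.mk.injEq] at ht
  obtain ⟨ht1, ht2, ht3⟩ := ht
  subst ht1; subst ht2
  obtain ⟨⟨s1, s2⟩, hs⟩ := h2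
  rw [F_apply, Prod.mk.injEq, Prod.mk.injEq] at hs
  obtain ⟨hs1, hs2, hs3⟩ := hs
  subst hs1; subst hs2
  constructor
  · refine (g_injective hm ?_).symm
    rw [← ht3, mul_one, mul_zero, add_zero]
  · refine (g_injective hm ?_).symm
    rw [← hs3, mul_one, mul_zero, zero_add]

lemma L1_ne_L2 (b c c' : ZMod p) : L1 hm b c ≠ L2 hm c' := by
  intro h
  have h1 : ((1 : ZMod p), b, g hm c) ∈ L2 hm c' := by
    rw [← h]
    exact ⟨1, by rw [ℓ1_apply, mul_one, mul_one]⟩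
  obtain ⟨t, ht⟩ := h1
  rw [ℓ2_apply, Prod.mk.injEq] at ht
  exact one_ne_zero ht.1.symm

lemma card_bot' : Nat.card ((⊥ : AddSubgroup (A p m))) = 1 := AddSubgroup.card_bot
lemma card_top' : Nat.card ((⊤ : AddSubgroup (A p m))) = p ^ (m + 2) := by
  rw [AddSubgroup.card_top, card_A]

-- numeric distinctness
lemma num_facts : (1 : ℕ) < p ∧ p < p ^ 2 ∧ p ^ 2 < p ^ (m + 2) := by
  have h1 : 1 < p := one_lt_p hm
  refine ⟨h1, ?_, ?_⟩
  · calc p = p ^ 1 := (pow_one p).symm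
      _ < p ^ 2 := Nat.pow_lt_pow_right h1 one_lt_two
  · exact Nat.pow_lt_pow_right h1 (by omega)

/-- index type for all isolated subgroups -/
abbrev Index1 (q : ℕ) : Type := ((ZMod q × ZMod q) ⊕ ZMod q) ⊕ ((ZMod q × ZMod q) ⊕ Bool)

def Φ : Index1 p → AddSubgroup (A p m)
  | .inl (.inl (b, c)) => L1 hm b c
  | .inl (.inr c) => L2 hm c
  | .inr (.inl (α, β)) => P hm α β
  | .inr (.inr true) => ⊥
  | .inr (.inr false) => ⊤

lemma Φ_aiso (i : Index1 p) : AIso (Φ hm i) := by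
  rcases i with (⟨b, c⟩ | c) | (⟨α, β⟩ | (_ | _))
  · exact aiso_L1 hm b c
  · exact aiso_L2 hm c
  · exact aiso_P hm α β
  · exact aiso_top
  · exact aiso_bot hm

omit hm in
lemma ne_of_card {K K' : AddSubgroup (A p m)} (h : Nat.card K ≠ Nat.card K') : K ≠ K' :=
  fun he => h (by rw [he])

lemma Φ_injective : Function.Injective (Φ (p := p) hm) := by
  obtain ⟨h1, h2, h3⟩ := num_facts (p := p) hm
  have d12 : p ≠ p ^ 2 := Nat.ne_of_lt h2
  have d13 : p ≠ p ^ (m + 2) := Nat.ne_of_lt (lt_trans h2 h3)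
  have d23 : (p : ℕ) ^ 2 ≠ p ^ (m + 2) := Nat.ne_of_lt h3
  have d01 : (1 : ℕ) ≠ p := Nat.ne_of_lt h1
  have d02 : (1 : ℕ) ≠ p ^ 2 := Nat.ne_of_lt (lt_trans h1 h2)
  have d03 : (1 : ℕ) ≠ p ^ (m + 2) := Nat.ne_of_lt (lt_trans (lt_trans h1 h2) h3)
  intro i j hij
  rcases i with (⟨b, c⟩ | c) | (⟨α, β⟩ | (_ | _)) <;>
    rcases j with (⟨b', c'⟩ | c') | (⟨α', β'⟩ | (_ | _)) <;>
    simp only [Φ] at hij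
  · obtain ⟨hb, hc⟩ := inj_L1 hm hij
    rw [hb, hc]
  · exact absurd hij (L1_ne_L2 hm b c c')
  · exact absurd hij (ne_of_card (by rw [card_L1 hm, card_P hm]; exact d12))
  · exact absurd hij (ne_of_card (by rw [card_L1 hm, card_top' hm]; exact d13))
  · exact absurd hij (ne_of_card (by rw [card_L1 hm, card_bot' hm]; exact d01.symm))
  · exact absurd hij.symm (L1_ne_L2 hm b' c' c)
  · rw [inj_L2 hm hij]
  · exact absurd hij (ne_of_card (by rw [card_L2 hm, card_P hm]; exact d12))
  · exact absurd hij (ne_of_card (by rw [card_L2 hm, card_top' hm]; exact d13))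
  · exact absurd hij (ne_of_card (by rw [card_L2 hm, card_bot' hm]; exact d01.symm))
  · exact absurd hij (ne_of_card (by rw [card_P hm, card_L1 hm]; exact d12.symm))
  · exact absurd hij (ne_of_card (by rw [card_P hm, card_L2 hm]; exact d12.symm))
  · obtain ⟨ha, hb⟩ := inj_P hm hij
    rw [ha, hb]
  · exact absurd hij (ne_of_card (by rw [card_P hm, card_top' hm]; exact d23))
  · exact absurd hij (ne_of_card (by rw [card_P hm, card_bot' hm]; exact d02.symm))
  · exact absurd hij (ne_of_card (by rw [card_top' hm, card_L1 hm]; exact d13.symm))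
  · exact absurd hij (ne_of_card (by rw [card_top' hm, card_L2 hm]; exact d13.symm))
  · exact absurd hij (ne_of_card (by rw [card_top' hm, card_P hm]; exact d23.symm))
  · rfl
  · exact absurd hij (ne_of_card (by rw [card_top' hm, card_bot' hm]; exact d03.symm))
  · exact absurd hij (ne_of_card (by rw [card_bot' hm, card_L1 hm]; exact d01))
  · exact absurd hij (ne_of_card (by rw [card_bot' hm, card_L2 hm]; exact d01))
  · exact absurd hij (ne_of_card (by rw [card_bot' hm, card_P hm]; exact d02))
  · exact absurd hij (ne_of_card (by rw [card_bot' hm, card_top' hm]; exact d03))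
  · rfl

lemma Φ_surjective {K : AddSubgroup (A p m)} (hK : AIso K) : ∃ i : Index1 p, Φ hm i = K := by
  by_cases hbot : K = ⊥
  · exact ⟨.inr (.inr true), hbot.symm⟩
  by_cases htop : K = ⊤
  · exact ⟨.inr (.inr false), htop.symm⟩
  rcases classification hm hK hbot htop with ⟨b, c, hbc⟩ | ⟨c, hc⟩ | ⟨α, β, hab⟩
  · exact ⟨.inl (.inl (b, c)), hbc.symm⟩
  · exact ⟨.inl (.inr c), hc.symm⟩
  · exact ⟨.inr (.inl (α, β)), hab.symm⟩

abbrev Index2 (q : ℕ) : Type := (ZMod q × ZMod q) ⊕ ZMod q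

lemma count1 : Nat.card {H : Subgroup (M p m) | H.IsIsolated} = 2 * p ^ 2 + p + 2 := by
  have e1 : {H : Subgroup (M p m) // H.IsIsolated} ≃ {K : AddSubgroup (A p m) // AIso K} :=
    (E p m).subtypeEquiv fun H => isIsolated_iff_aiso H
  have e2 : Index1 p ≃ {K : AddSubgroup (A p m) // AIso K} :=
    Equiv.ofBijective (fun i => ⟨Φ hm i, Φ_aiso hm i⟩)
      ⟨fun i j hij => Φ_injective hm (Subtype.ext_iff.mp hij),
       fun K => (Φ_surjective hm K.2).imp fun _ hi => Subtype.ext hi⟩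
  have : Nat.card {H : Subgroup (M p m) | H.IsIsolated} = Nat.card (Index1 p) :=
    Nat.card_congr (e1.trans e2.symm)
  rw [this]
  have hb : Nat.card Bool = 2 := by simp [Nat.card_eq_fintype_card]
  simp only [Index1, Nat.card_sum, Nat.card_prod, Nat.card_zmod, hb]
  ring

lemma count2 :
    Nat.card {H : Subgroup (M p m) | H.IsIsolated ∧ Nat.card H = p} = p ^ 2 + p := by
  obtain ⟨h1, h2, h3⟩ := num_facts (p := p) hm
  have e1 : {H : Subgroup (M p m) // H.IsIsolated ∧ Nat.card H = p}
      ≃ {K : AddSubgroup (A p m) // AIso K ∧ Nat.card K = p} :=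
    (E p m).subtypeEquiv fun H =>
      and_congr (isIsolated_iff_aiso H) (by rw [card_E])
  have e2 : Index2 p ≃ {K : AddSubgroup (A p m) // AIso K ∧ Nat.card K = p} := by
    refine Equiv.ofBijective (fun i => ⟨Φ hm (.inl i), Φ_aiso hm _, ?_⟩) ⟨?_, ?_⟩
    · rcases i with ⟨b, c⟩ | c
      · exact card_L1 hm b c
      · exact card_L2 hm c
    · intro i j hij
      exact Sum.inl.inj (Φ_injective hm (Subtype.ext_iff.mp hij))
    · rintro ⟨K, hK, hcard⟩
      obtain ⟨i, hi⟩ := Φ_surjective hm hK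
      rcases i with i' | (⟨a, b⟩ | (_ | _))
      · exact ⟨i', Subtype.ext hi⟩
      · exfalso
        rw [← hi] at hcard; simp only [Φ] at hcard; rw [card_P hm] at hcard
        exact Nat.ne_of_lt h2 hcard.symm
      · exfalso
        rw [← hi] at hcard; simp only [Φ] at hcard; rw [card_top' hm] at hcard
        exact Nat.ne_of_lt (lt_trans h2 h3) hcard.symm
      · exfalso
        rw [← hi] at hcard; simp only [Φ] at hcard; rw [card_bot' hm] at hcard
        exact Nat.ne_of_lt h1 hcard
  have : Nat.card {H : Subgroup (M p m) | H.IsIsolated ∧ Nat.card H = p}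
      = Nat.card (Index2 p) := Nat.card_congr (e1.trans e2.symm)
  rw [this]
  simp only [Index2, Nat.card_sum, Nat.card_prod, Nat.card_zmod]
  ring

lemma count3 :
    Nat.card {H : Subgroup (M p m) | H.IsIsolated ∧ Nat.card H = p ^ 2} = p ^ 2 := by
  obtain ⟨h1, h2, h3⟩ := num_facts (p := p) hm
  have e1 : {H : Subgroup (M p m) // H.IsIsolated ∧ Nat.card H = p ^ 2}
      ≃ {K : AddSubgroup (A p m) // AIso K ∧ Nat.card K = p ^ 2} :=
    (E p m).subtypeEquiv fun H =>
      and_congr (isIsolated_iff_aiso H) (by rw [card_E])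
  have e2 : (ZMod p × ZMod p) ≃ {K : AddSubgroup (A p m) // AIso K ∧ Nat.card K = p ^ 2} := by
    refine Equiv.ofBijective
      (fun i => ⟨Φ hm (.inr (.inl i)), Φ_aiso hm _, card_P hm i.1 i.2⟩) ⟨?_, ?_⟩
    · intro i j hij
      exact Sum.inl.inj (Sum.inr.inj (Φ_injective hm (Subtype.ext_iff.mp hij)))
    · rintro ⟨K, hK, hcard⟩
      obtain ⟨i, hi⟩ := Φ_surjective hm hK
      rcases i with (⟨b, c⟩ | c) | (ab | (_ | _))
      · exfalso
        rw [← hi] at hcard; simp only [Φ] at hcard; rw [card_L1 hm] at hcard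
        exact Nat.ne_of_lt h2 hcard
      · exfalso
        rw [← hi] at hcard; simp only [Φ] at hcard; rw [card_L2 hm] at hcard
        exact Nat.ne_of_lt h2 hcard
      · exact ⟨ab, Subtype.ext hi⟩
      · exfalso
        rw [← hi] at hcard; simp only [Φ] at hcard; rw [card_top' hm] at hcard
        exact Nat.ne_of_lt h3 hcard.symm
      · exfalso
        rw [← hi] at hcard; simp only [Φ] at hcard; rw [card_bot' hm] at hcard
        exact Nat.ne_of_lt (lt_trans h1 h2) hcard
  have : Nat.card {H : Subgroup (M p m) | H.IsIsolated ∧ Nat.card H = p ^ 2}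
      = Nat.card (ZMod p × ZMod p) := Nat.card_congr (e1.trans e2.symm)
  rw [this, Nat.card_prod, Nat.card_zmod]
  ring

end Stmt15

theorem stmt15 {p : ℕ} [Fact p.Prime] {m : ℕ} (hm : 2 ≤ m) :
    Nat.card {H : Subgroup (Multiplicative (ZMod p) × Multiplicative (ZMod p) ×
        Multiplicative (ZMod (p ^ m))) | H.IsIsolated} = 2 * p ^ 2 + p + 2 ∧
    Nat.card {H : Subgroup (Multiplicative (ZMod p) × Multiplicative (ZMod p) ×
        Multiplicative (ZMod (p ^ m))) | H.IsIsolated ∧ Nat.card H = p} = p ^ 2 + p ∧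
    Nat.card {H : Subgroup (Multiplicative (ZMod p) × Multiplicative (ZMod p) ×
        Multiplicative (ZMod (p ^ m))) | H.IsIsolated ∧ Nat.card H = p ^ 2} = p ^ 2 :=
  ⟨Stmt15.count1 hm, Stmt15.count2 hm, Stmt15.count3 hm⟩
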